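/- (Infinite-time Gronwall lemma, version 2) Let B: [1,∞) → [0,∞) be continuously differentiable and suppose there are constants σ > 0, 0 < ε < σ, δ > 0, K > 0 such that |B'(t)| ≤ (ε/t)·B(t) + δ/t^{1+σ} and B(t) ≤ K/t^σ for all t ≥ 1. Then B(t) ≤ δ/((σ−ε)·t^σ) for all t ≥ 1. -/

import Mathlib

open MeasureTheory Filter

theorem stmt8 (B B' : ℝ → ℝ) (σ ε δ K : ℝ)
    (hσ : 0 < σ) (hε : 0 < ε) (hεσ : ε < σ) (hδ : 0 < δ) (hK : 0 < K)
    (hBnonneg : ∀ t ≥ (1 : ℝ), 0 ≤ B t)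
    (hderiv : ∀ t ≥ (1 : ℝ), HasDerivAt B (B' t) t)
    (hcont : ContinuousOn B' (Set.Ici 1))
    (hbound : ∀ t ≥ (1 : ℝ), |B' t| ≤ ε / t * B t + δ / t ^ (1 + σ))
    (hapriori : ∀ t ≥ (1 : ℝ), B t ≤ K / t ^ σ) :
    ∀ t ≥ (1 : ℝ), B t ≤ δ / ((σ - ε) * t ^ σ) := by
  have hσ0 : σ ≠ 0 := ne_of_gt hσ
  -- Key improvement step
  have key : ∀ C : ℝ, (∀ s ≥ (1:ℝ), B s ≤ C / s ^ σ) →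
      ∀ t ≥ (1:ℝ), B t ≤ ((ε * C + δ) / σ) / t ^ σ := by
    intro C hC t ht
    have ht0 : (0:ℝ) < t := lt_of_lt_of_le one_pos ht
    have hC0 : 0 ≤ C := by
      have := hC 1 le_rfl
      have h1 := hBnonneg 1 le_rfl
      rw [Real.one_rpow, div_one] at this
      linarith
    have hnum : 0 ≤ ε * C + δ := by positivity
    have h1 : ∀ T ≥ t, B t ≤ K / T ^ σ + ((ε * C + δ) / σ) / t ^ σ := by
      intro T hT
      have hT1 : (1:ℝ) ≤ T := le_trans ht hT
      have hT0 : (0:ℝ) < T := lt_of_lt_of_le one_pos hT1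
      have hsub : Set.uIcc t T ⊆ Set.Ici (1:ℝ) := by
        rw [Set.uIcc_of_le hT]
        intro x hx; exact le_trans ht hx.1
      have hderiv' : ∀ x ∈ Set.uIcc t T, HasDerivAt B (B' x) x :=
        fun x hx => hderiv x (hsub hx)
      have hint : IntervalIntegrable B' volume t T :=
        (hcont.mono hsub).intervalIntegrable
      have hftc := intervalIntegral.integral_eq_sub_of_hasDerivAt hderiv' hint
      have habs : |∫ s in t..T, B' s| ≤ ∫ s in t..T, |B' s| :=
        intervalIntegral.abs_integral_le_integral_abs hT
      have hptwise : ∀ s ∈ Set.Icc t T, |B' s| ≤ (ε * C + δ) * s ^ (-(1+σ)) := by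
        intro s hs
        have hs1 : (1:ℝ) ≤ s := le_trans ht hs.1
        have hs0 : (0:ℝ) < s := lt_of_lt_of_le one_pos hs1
        have hb := hbound s hs1
        have hBs := hC s hs1
        have hspow : s ^ (1+σ) = s * s ^ σ := by
          rw [Real.rpow_add hs0, Real.rpow_one]
        have hεs : 0 ≤ ε / s := by positivity
        have h2 : ε / s * B s ≤ ε / s * (C / s ^ σ) :=
          mul_le_mul_of_nonneg_left hBs hεs
        have hsσ : (0:ℝ) < s ^ σ := Real.rpow_pos_of_pos hs0 σ
        have h3 : ε / s * (C / s ^ σ) = ε * C * (s ^ (1+σ))⁻¹ := by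
          rw [hspow]; field_simp
        have h4 : s ^ (-(1+σ)) = (s ^ (1+σ))⁻¹ := Real.rpow_neg hs0.le _
        calc |B' s| ≤ ε / s * B s + δ / s ^ (1+σ) := hb
          _ ≤ ε / s * (C / s ^ σ) + δ / s ^ (1+σ) := add_le_add h2 le_rfl
          _ = (ε * C + δ) * s ^ (-(1+σ)) := by rw [h4, h3]; ring
      have hintabs : IntervalIntegrable (fun s => |B' s|) volume t T := hint.abs
      have hintg : IntervalIntegrable (fun s => (ε * C + δ) * s ^ (-(1+σ))) volume t T := by
        apply ContinuousOn.intervalIntegrable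
        apply ContinuousOn.mul continuousOn_const
        apply ContinuousOn.rpow_const continuousOn_id
        intro x hx
        exact Or.inl (ne_of_gt (lt_of_lt_of_le one_pos (hsub hx)))
      have hmono : (∫ s in t..T, |B' s|) ≤ ∫ s in t..T, (ε * C + δ) * s ^ (-(1+σ)) :=
        intervalIntegral.integral_mono_on hT hintabs hintg hptwise
      have hzero : (0:ℝ) ∉ Set.uIcc t T := fun h => absurd (hsub h) (by norm_num)
      have hval : (∫ s in t..T, (ε * C + δ) * s ^ (-(1+σ)))
          = (ε * C + δ) * ((T ^ (-σ) - t ^ (-σ)) / (-σ)) := by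
        rw [intervalIntegral.integral_const_mul,
          integral_rpow (Or.inr ⟨by intro h; apply hσ0; linarith [neg_eq_iff_eq_neg.mp h], hzero⟩)]
        norm_num
      have hBT := hapriori T hT1
      have htσ : (0:ℝ) < t ^ σ := Real.rpow_pos_of_pos ht0 σ
      have hTσ : (0:ℝ) < T ^ σ := Real.rpow_pos_of_pos hT0 σ
      have htneg : t ^ (-σ) = (t ^ σ)⁻¹ := Real.rpow_neg ht0.le _
      have hTneg : T ^ (-σ) = (T ^ σ)⁻¹ := Real.rpow_neg hT0.le _
      have hintval : (∫ s in t..T, |B' s|) ≤ (ε * C + δ) / σ * (t ^ σ)⁻¹ := by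
        rw [hval] at hmono
        have : (ε * C + δ) * ((T ^ (-σ) - t ^ (-σ)) / (-σ))
            ≤ (ε * C + δ) / σ * (t ^ σ)⁻¹ := by
          rw [htneg, hTneg]
          have hTinv : 0 ≤ (T ^ σ)⁻¹ := by positivity
          have e : (((T ^ σ)⁻¹ - (t ^ σ)⁻¹) / (-σ)) = (((t ^ σ)⁻¹ - (T ^ σ)⁻¹) / σ) := by
            field_simp
            ring
          rw [e]
          have h5 : ((t ^ σ)⁻¹ - (T ^ σ)⁻¹) / σ ≤ (t ^ σ)⁻¹ / σ := by gcongr; linarith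
          calc (ε * C + δ) * (((t ^ σ)⁻¹ - (T ^ σ)⁻¹) / σ)
              ≤ (ε * C + δ) * ((t ^ σ)⁻¹ / σ) := mul_le_mul_of_nonneg_left h5 hnum
            _ = (ε * C + δ) / σ * (t ^ σ)⁻¹ := by ring
        linarith
      -- B t = B T - ∫ B'
      have : B t = B T - ∫ s in t..T, B' s := by linarith [hftc]
      have hneg : -(∫ s in t..T, B' s) ≤ ∫ s in t..T, |B' s| :=
        le_trans (neg_le_abs _) habs
      calc B t = B T - ∫ s in t..T, B' s := this
        _ ≤ K / T ^ σ + ∫ s in t..T, |B' s| := by linarith [hBT]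
        _ ≤ K / T ^ σ + ((ε * C + δ) / σ) / t ^ σ := by
            rw [div_eq_mul_inv ((ε * C + δ) / σ)]; linarith
    -- let T → ∞
    have htend : Tendsto (fun T : ℝ => K / T ^ σ + ((ε * C + δ) / σ) / t ^ σ) atTop
        (nhds (0 + ((ε * C + δ) / σ) / t ^ σ)) := by
      apply Tendsto.add _ tendsto_const_nhds
      have h0 : Tendsto (fun T : ℝ => T ^ (-σ)) atTop (nhds 0) :=
        tendsto_rpow_neg_atTop hσ
      have : Tendsto (fun T : ℝ => K * T ^ (-σ)) atTop (nhds (K * 0)) :=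
        h0.const_mul K
      simp only [mul_zero] at this
      apply this.congr'
      filter_upwards [eventually_ge_atTop (1:ℝ)] with T hT1
      rw [Real.rpow_neg (le_trans zero_le_one hT1), div_eq_mul_inv]
    have := ge_of_tendsto htend (by
      filter_upwards [eventually_ge_atTop t] with T hT
      exact h1 T hT)
    linarith
  -- iterate
  set L := δ / (σ - ε) with hL
  have hσε : (0:ℝ) < σ - ε := by linarith
  have hc : ∀ n : ℕ, ∀ s ≥ (1:ℝ), B s ≤ ((ε/σ)^n * (K - L) + L) / s ^ σ := by
    intro n
    induction n with
    | zero => simpa using hapriori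
    | succ n ih =>
      intro s hs
      have h := key _ ih s hs
      have heq : (ε * ((ε/σ)^n * (K - L) + L) + δ) / σ = (ε/σ)^(n+1) * (K - L) + L := by
        rw [hL]
        simp only [div_pow]
        field_simp
        ring
      rwa [heq] at h
  intro t ht
  have ht0 : (0:ℝ) < t := lt_of_lt_of_le one_pos ht
  have htσ : (0:ℝ) < t ^ σ := Real.rpow_pos_of_pos ht0 σ
  have hlim : Tendsto (fun n : ℕ => ((ε/σ)^n * (K - L) + L) / t ^ σ) atTop
      (nhds ((0 * (K - L) + L) / t ^ σ)) := by
    apply Tendsto.div_const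
    apply Tendsto.add_const
    apply Tendsto.mul_const
    apply tendsto_pow_atTop_nhds_zero_of_lt_one
    · positivity
    · rw [div_lt_one hσ]; exact hεσ
  have hfin := ge_of_tendsto hlim (by
    filter_upwards with n
    exact hc n t ht)
  rw [zero_mul, zero_add] at hfin
  rw [hL] at hfin
  rwa [div_div] at hfin
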